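/- arXiv:1507.02904 — 4 statements merged into one kernel-verified Lean document; each statement's English description precedes it below -/
import Mathlib

section
/- Let Y be a Gaussian random variable in a separable Hilbert space H with mean m and covariance operator Σ having eigenexpansion Σ = Σ_{i≥1} λ_i Ψ_i⊗Ψ_i, and let σ > 0. Then for every y ∈ H, E exp(−σ‖Y − y‖²) = Π_{i≥1}(1 + 2σλ_i)^{−1/2} · exp(−σ Σ_{i≥1} ⟨m − y, Ψ_i⟩² / (1 + 2σλ_i)), i.e. it equals |I + 2σΣ|^{−1/2} exp(−σ‖(I + 2σΣ)^{−1/2}(y − m)‖²). -/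
open MeasureTheory ProbabilityTheory
open scoped ENNReal NNReal

open Filter Topology

lemma gauss1d (σ : ℝ) (hσ : 0 < σ) (a c : ℝ) (v : ℝ≥0) :
    ∫ t, Real.exp (-σ * (t - c) ^ 2) ∂(gaussianReal a v)
      = ((1 : ℝ) + 2 * σ * (v : ℝ)) ^ (-(1 : ℝ) / 2)
          * Real.exp (-σ * (a - c) ^ 2 / (1 + 2 * σ * (v : ℝ))) := by
  rcases eq_or_ne v 0 with hv | hv
  · subst hv
    simp [gaussianReal_zero_var, integral_dirac]
  · have hV : 0 < (v : ℝ) := by positivity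
    set V : ℝ := (v : ℝ) with hVdef
    set K : ℝ := 1 + 2 * σ * V with hK
    have hKpos : 0 < K := by positivity
    set A : ℝ := σ + 1 / (2 * V) with hA
    have hApos : 0 < A := by positivity
    set p : ℝ := (σ * c + a / (2 * V)) / A with hp
    set q : ℝ := σ * (a - c) ^ 2 / K with hq
    have key : ∀ t : ℝ, -(t - a) ^ 2 / (2 * V) + -σ * (t - c) ^ 2
        = -q + -A * (t - p) ^ 2 := by
      intro t
      rw [hq, hp, hA, hK]
      have h1 : (2 : ℝ) * V ≠ 0 := by positivity
      have h2 : (1 : ℝ) + 2 * σ * V ≠ 0 := by positivity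
      have h3 : σ + 1 / (2 * V) ≠ 0 := by positivity
      field_simp
      ring
    rw [gaussianReal_of_var_ne_zero a hv]
    have hpdf : (gaussianPDF a v) = fun x => ((gaussianPDFReal a v x).toNNReal : ℝ≥0∞) := rfl
    rw [hpdf, integral_withDensity_eq_integral_smul
      (measurable_gaussianPDFReal a v).real_toNNReal]
    have heq : ∀ t : ℝ, ((gaussianPDFReal a v t).toNNReal : ℝ≥0) • Real.exp (-σ * (t - c) ^ 2)
        = ((Real.sqrt (2 * Real.pi * V))⁻¹ * Real.exp (-q)) * Real.exp (-A * (t - p) ^ 2) := by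
      intro t
      rw [NNReal.smul_def, smul_eq_mul, Real.coe_toNNReal _ (gaussianPDFReal_nonneg a v t),
        gaussianPDFReal]
      have e1 : Real.exp (-(t - a) ^ 2 / (2 * V)) * Real.exp (-σ * (t - c) ^ 2)
          = Real.exp (-q) * Real.exp (-A * (t - p) ^ 2) := by
        rw [← Real.exp_add, ← Real.exp_add, key t]
      rw [mul_assoc _ (Real.exp _) (Real.exp _), e1, ← mul_assoc]
    simp_rw [heq]
    rw [MeasureTheory.integral_const_mul]
    have hshift : (∫ t : ℝ, Real.exp (-A * (t - p) ^ 2))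
        = ∫ t : ℝ, Real.exp (-A * t ^ 2) :=
      integral_sub_right_eq_self (fun t => Real.exp (-A * t ^ 2)) p
    rw [hshift, integral_gaussian]
    have h2piV : (0:ℝ) < 2 * Real.pi * V := by positivity
    have hPiA : Real.pi / A = 2 * Real.pi * V / K := by
      rw [hA, hK]
      have h1 : (2 : ℝ) * V ≠ 0 := by positivity
      have h2 : (1 : ℝ) + 2 * σ * V ≠ 0 := by positivity
      field_simp
      ring
    rw [hPiA, Real.sqrt_div h2piV.le]
    have hKr : K ^ (-(1 : ℝ) / 2) = (Real.sqrt K)⁻¹ := by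
      rw [neg_div, Real.rpow_neg hKpos.le, ← Real.sqrt_eq_rpow]
    rw [hKr]
    have hs : Real.sqrt (2 * Real.pi * V) ≠ 0 := by positivity
    have hexpq : Real.exp (-q) = Real.exp (-σ * (a - c) ^ 2 / K) := by
      rw [hq]; ring_nf
    rw [hexpq]
    field_simp


open MeasureTheory ProbabilityTheory Real Filter Topology
open scoped ENNReal NNReal

/-- Gaussian-kernel mean embedding of `N(m, Σ)` in a separable Hilbert space:
if `Y` is Gaussian with mean `m` and covariance diagonalized in the orthonormal
basis `b` with eigenvalues `ev` (i.e. the coordinates `⟨Y, b i⟩` are independent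
`N(⟨m, b i⟩, ev i)`), then for every `y`,
`E exp(−σ‖Y − y‖²) = ∏ᵢ (1 + 2σ λᵢ)^{−1/2} · exp(−σ Σᵢ ⟨m − y, Ψᵢ⟩²/(1 + 2σλᵢ))`. -/
theorem gaussian_kernel_embedding_eval
    {H : Type*} [NormedAddCommGroup H] [InnerProductSpace ℝ H] [CompleteSpace H]
    [MeasurableSpace H] [BorelSpace H]
    (b : HilbertBasis ℕ ℝ H) (m : H) (ev : ℕ → ℝ≥0)
    (hev : Summable fun i => (ev i : ℝ))
    (μ : Measure H) [IsProbabilityMeasure μ]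
    (hGauss : ∀ i, Measure.map (fun x => (inner ℝ x (b i) : ℝ)) μ
        = gaussianReal (inner ℝ m (b i)) (ev i))
    (hIndep : iIndepFun
        (fun i => fun x : H => (inner ℝ x (b i) : ℝ)) μ)
    (σ : ℝ) (hσ : 0 < σ) (y : H) :
    ∫ x, Real.exp (-σ * ‖x - y‖ ^ 2) ∂μ
      = (∏' i, ((1 : ℝ) + 2 * σ * (ev i : ℝ)) ^ (-(1 : ℝ) / 2))
          * Real.exp (-σ * ∑' i, (inner ℝ (m - y) (b i) : ℝ) ^ 2
              / (1 + 2 * σ * (ev i : ℝ))) := by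
  classical
  set c : ℕ → ℝ := fun i => (inner ℝ y (b i) : ℝ) with hc
  set a : ℕ → ℝ := fun i => (inner ℝ m (b i) : ℝ) with ha
  set g : ℕ → H → ℝ := fun i x => Real.exp (-σ * ((inner ℝ x (b i) : ℝ) - c i) ^ 2) with hg
  set T : ℕ → ℝ := fun i => ((1 : ℝ) + 2 * σ * (ev i : ℝ)) ^ (-(1 : ℝ) / 2)
      * Real.exp (-σ * (a i - c i) ^ 2 / (1 + 2 * σ * (ev i : ℝ))) with hT
  have hcont : ∀ i, Continuous fun x : H => (inner ℝ x (b i) : ℝ) :=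
    fun i => continuous_id.inner continuous_const
  have hgcont : ∀ i, Continuous (g i) := by
    intro i
    exact Real.continuous_exp.comp
      ((continuous_const.mul (((hcont i).sub continuous_const).pow 2)))
  have hgmeas : ∀ i, Measurable (g i) := fun i => (hgcont i).measurable
  -- per coordinate integral
  have hint : ∀ i, ∫ x, g i x ∂μ = T i := by
    intro i
    have : ∫ x, g i x ∂μ
        = ∫ t, Real.exp (-σ * (t - c i) ^ 2)
            ∂(Measure.map (fun x => (inner ℝ x (b i) : ℝ)) μ) := by
      rw [integral_map (hcont i).measurable.aemeasurable]
      exact (Real.continuous_exp.comp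
        ((continuous_const.mul ((continuous_id.sub continuous_const).pow 2)))).aestronglyMeasurable
    rw [this, hGauss i, gauss1d σ hσ _ (c i) (ev i)]
  -- independence of the g's
  have hgind : iIndepFun g μ := by
    have := hIndep.comp (g := fun i (t : ℝ) => Real.exp (-σ * (t - c i) ^ 2))
      (fun i => by fun_prop)
    exact this
  -- finite products
  have hprod : ∀ n : ℕ, ∫ x, ∏ i ∈ Finset.range n, g i x ∂μ
      = ∏ i ∈ Finset.range n, T i := by
    intro n
    induction n with
    | zero => simp
    | succ n ih =>
      have hpair := hgind.indepFun_prod_range_succ hgmeas n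
      have hX : AEStronglyMeasurable (∏ j ∈ Finset.range n, g j) μ := by
        have hXm : Measurable fun x => ∏ j ∈ Finset.range n, g j x :=
          Finset.measurable_prod _ fun i _ => hgmeas i
        have hh : (∏ j ∈ Finset.range n, g j) = fun x => ∏ j ∈ Finset.range n, g j x := by
          ext x; simp [Finset.prod_apply]
        rw [hh]; exact hXm.aestronglyMeasurable
      have := hpair.integral_mul_eq_mul_integral hX (hgmeas n).aestronglyMeasurable
      simp_rw [Finset.prod_range_succ]
      calc ∫ x, (∏ i ∈ Finset.range n, g i x) * g n x ∂μ
          = ∫ x, ((∏ j ∈ Finset.range n, g j) * g n) x ∂μ := by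
            congr 1; ext x; simp [Finset.prod_apply]
        _ = (∫ x, (∏ j ∈ Finset.range n, g j) x ∂μ) * ∫ x, g n x ∂μ := this
        _ = (∏ i ∈ Finset.range n, T i) * T n := by
            rw [hint n, ← ih]; congr 1; apply integral_congr_ae; filter_upwards with x
            simp [Finset.prod_apply]
  -- limits
  have hK1 : ∀ i : ℕ, (1 : ℝ) ≤ 1 + 2 * σ * (ev i : ℝ) := by
    intro i
    nlinarith [(ev i).coe_nonneg, hσ.le]
  have hdac : ∀ i, (inner ℝ (m - y) (b i) : ℝ) = a i - c i := by
    intro i; simp only [ha, hc]; rw [inner_sub_left]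
  have hdsum : Summable fun i => (inner ℝ (m - y) (b i) : ℝ) ^ 2 := by
    have h0 := (b.hasSum_inner_mul_inner (m - y) (m - y)).summable
    refine h0.congr fun i => ?_
    rw [real_inner_comm (b i) (m - y), sq]
  have hsum2 : Summable fun i => (inner ℝ (m - y) (b i) : ℝ) ^ 2 / (1 + 2 * σ * (ev i : ℝ)) := by
    refine hdsum.of_nonneg_of_le (fun i => by positivity) (fun i => ?_)
    exact div_le_self (sq_nonneg _) (hK1 i)
  have hS : Tendsto (fun n => ∑ i ∈ Finset.range n, (inner ℝ (m - y) (b i) : ℝ) ^ 2 / (1 + 2 * σ * (ev i : ℝ)))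
      atTop (𝓝 (∑' i, (inner ℝ (m - y) (b i) : ℝ) ^ 2 / (1 + 2 * σ * (ev i : ℝ)))) := hsum2.hasSum.tendsto_sum_nat
  have hpos : ∀ i : ℕ, (0 : ℝ) < ((1 : ℝ) + 2 * σ * (ev i : ℝ)) ^ (-(1 : ℝ) / 2) := by
    intro i
    exact Real.rpow_pos_of_pos (by positivity) _
  have hsummul : Summable fun i => 2 * σ * (ev i : ℝ) := by
    simpa [mul_assoc] using hev.mul_left (2 * σ)
  have hlog0 : Summable fun i => Real.log (1 + 2 * σ * (ev i : ℝ)) := by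
    refine Summable.of_nonneg_of_le (fun i => Real.log_nonneg (hK1 i)) (fun i => ?_) hsummul
    have := Real.log_le_sub_one_of_pos (x := 1 + 2 * σ * (ev i : ℝ)) (by positivity)
    linarith
  have hlog : Summable fun i => Real.log (((1 : ℝ) + 2 * σ * (ev i : ℝ)) ^ (-(1 : ℝ) / 2)) := by
    refine ((hlog0.mul_left (-(1 : ℝ) / 2)).congr fun i => ?_)
    rw [Real.log_rpow (by positivity)]
  have hHP : HasProd (fun i => ((1 : ℝ) + 2 * σ * (ev i : ℝ)) ^ (-(1 : ℝ) / 2))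
      (∏' i, ((1 : ℝ) + 2 * σ * (ev i : ℝ)) ^ (-(1 : ℝ) / 2)) :=
    (Real.multipliable_of_summable_log hpos hlog).hasProd
  have hP : Tendsto (fun n => ∏ i ∈ Finset.range n, ((1 : ℝ) + 2 * σ * (ev i : ℝ)) ^ (-(1 : ℝ) / 2))
      atTop (𝓝 (∏' i, ((1 : ℝ) + 2 * σ * (ev i : ℝ)) ^ (-(1 : ℝ) / 2))) :=
    hHP.tendsto_prod_nat
  have hTn : ∀ n : ℕ, ∏ i ∈ Finset.range n, T i
      = (∏ i ∈ Finset.range n, ((1 : ℝ) + 2 * σ * (ev i : ℝ)) ^ (-(1 : ℝ) / 2))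
        * Real.exp (-σ * ∑ i ∈ Finset.range n, (inner ℝ (m - y) (b i) : ℝ) ^ 2 / (1 + 2 * σ * (ev i : ℝ))) := by
    intro n
    simp only [hT]
    rw [Finset.prod_mul_distrib]
    congr 1
    rw [Finset.mul_sum, Real.exp_sum]
    refine Finset.prod_congr rfl fun i _ => ?_
    congr 1
    rw [hdac i]
    ring
  have hRt : Tendsto (fun n => ∏ i ∈ Finset.range n, T i) atTop
      (𝓝 ((∏' i, ((1 : ℝ) + 2 * σ * (ev i : ℝ)) ^ (-(1 : ℝ) / 2))
        * Real.exp (-σ * ∑' i, (inner ℝ (m - y) (b i) : ℝ) ^ 2 / (1 + 2 * σ * (ev i : ℝ))))) := by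
    simp only [hTn]
    exact hP.mul ((Real.continuous_exp.tendsto _).comp (hS.const_mul (-σ)))
  have hxsum : ∀ x : H, HasSum (fun i => ((inner ℝ x (b i) : ℝ) - c i) ^ 2) (‖x - y‖ ^ 2) := by
    intro x
    have h0 := b.hasSum_inner_mul_inner (x - y) (x - y)
    rw [real_inner_self_eq_norm_sq] at h0
    have hfe : (fun i => (inner ℝ (x - y) (b i) : ℝ) * (inner ℝ (b i) (x - y) : ℝ))
        = fun i => ((inner ℝ x (b i) : ℝ) - c i) ^ 2 := by
      funext i
      rw [← real_inner_comm (b i) (x - y), inner_sub_left, sq]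
    rwa [hfe] at h0
  have hLt : Tendsto (fun n => ∫ x, ∏ i ∈ Finset.range n, g i x ∂μ) atTop
      (𝓝 (∫ x, Real.exp (-σ * ‖x - y‖ ^ 2) ∂μ)) := by
    refine tendsto_integral_of_dominated_convergence (fun _ => (1 : ℝ))
      (fun n => ((Finset.measurable_prod (Finset.range n)
        (fun i _ => hgmeas i)).aestronglyMeasurable))
      (integrable_const 1) (fun n => ?_) ?_
    · filter_upwards with x
      rw [Real.norm_eq_abs, abs_of_nonneg (Finset.prod_nonneg fun i _ => (Real.exp_pos _).le)]
      refine Finset.prod_le_one (fun i _ => (Real.exp_pos _).le) (fun i _ => ?_)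
      refine Real.exp_le_one_iff.mpr ?_
      nlinarith [sq_nonneg ((inner ℝ x (b i) : ℝ) - c i)]
    · filter_upwards with x
      have h1 : ∀ n : ℕ, ∏ i ∈ Finset.range n, g i x
          = Real.exp (-σ * ∑ i ∈ Finset.range n, ((inner ℝ x (b i) : ℝ) - c i) ^ 2) := by
        intro n
        rw [Finset.mul_sum, Real.exp_sum]
      simp only [h1]
      exact (Real.continuous_exp.tendsto _).comp ((hxsum x).tendsto_sum_nat.const_mul (-σ))
  have hEq : (fun n => ∫ x, ∏ i ∈ Finset.range n, g i x ∂μ)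
      = fun n => ∏ i ∈ Finset.range n, T i := funext hprod
  rw [hEq] at hLt
  exact tendsto_nhds_unique hLt hRt
end

section
/- Let Y, Y' be independent Gaussian random variables in a separable Hilbert space H, both with mean m and trace-class covariance Σ with eigenvalues (λ_i), and σ > 0. Then E exp(−σ‖Y − Y'‖²) = Π_{i≥1}(1 + 4σλ_i)^{−1/2} = |I + 4σΣ|^{−1/2}. -/
open MeasureTheory ProbabilityTheory Real Filter
open scoped ENNReal NNReal Topology

lemma gauss_int (σ : ℝ) (hσ : 0 < σ) (c t : ℝ) (v : ℝ≥0) :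
    ∫ s, Real.exp (-(σ * (t - s) ^ 2)) ∂gaussianReal c v
      = (Real.sqrt (1 + 2 * σ * v))⁻¹
        * Real.exp (-(σ / (1 + 2 * σ * v) * (t - c) ^ 2)) := by
  rcases eq_or_ne v 0 with hv | hv
  · simp [hv, integral_dirac]
  · have hvr : 0 < (v : ℝ) := by positivity
    have h1 : (0:ℝ) < 1 + 2 * σ * v := by positivity
    set A : ℝ := σ + 1 / (2 * v) with hA_def
    have hA : 0 < A := by positivity
    set B : ℝ := (2 * σ * t + c / v) / (2 * A) with hB_def
    set C : ℝ := -(σ / (1 + 2 * σ * v) * (t - c) ^ 2) with hC_def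
    have key : ∀ s : ℝ,
        gaussianPDFReal c v s * Real.exp (-(σ * (t - s) ^ 2))
          = (Real.sqrt (2 * π * v))⁻¹ * Real.exp C * Real.exp (-(A * (s - B) ^ 2)) := by
      intro s
      rw [gaussianPDFReal]
      rw [mul_assoc, ← Real.exp_add]
      have e : -(s - c) ^ 2 / (2 * (v:ℝ)) + -(σ * (t - s) ^ 2) = C + -(A * (s - B) ^ 2) := by
        rw [hC_def, hB_def, hA_def]
        field_simp
        ring
      rw [e, Real.exp_add, ← mul_assoc]
    rw [gaussianReal_of_var_ne_zero _ hv]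
    have hpdf : gaussianPDF c v = fun s => ((Real.toNNReal (gaussianPDFReal c v s) : ℝ≥0) : ℝ≥0∞) := rfl
    rw [hpdf, integral_withDensity_eq_integral_smul
      ((measurable_gaussianPDFReal c v).real_toNNReal)]
    have : ∀ s : ℝ, (Real.toNNReal (gaussianPDFReal c v s) : ℝ≥0) • Real.exp (-(σ * (t - s) ^ 2))
        = (Real.sqrt (2 * π * v))⁻¹ * Real.exp C * Real.exp (-(A * (s - B) ^ 2)) := by
      intro s
      rw [NNReal.smul_def, smul_eq_mul, Real.coe_toNNReal _ (gaussianPDFReal_nonneg c v s), key s]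
    rw [integral_congr_ae (Filter.Eventually.of_forall this)]
    rw [integral_const_mul]
    have hgauss : ∫ s : ℝ, Real.exp (-(A * (s - B) ^ 2)) = Real.sqrt (π / A) := by
      have h := integral_gaussian A
      simp only [neg_mul] at h
      rw [← h]
      exact integral_sub_right_eq_self (fun s => Real.exp (-(A * s ^ 2))) B
    rw [hgauss]
    have hconst : (Real.sqrt (2 * π * v))⁻¹ * Real.sqrt (π / A) = (Real.sqrt (1 + 2 * σ * v))⁻¹ := by
      rw [← Real.sqrt_inv, ← Real.sqrt_mul (by positivity)]
      rw [hA_def]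
      field_simp
      ring_nf
      rw [← Real.sqrt_mul (by positivity), inv_mul_cancel₀ (by positivity), Real.sqrt_one]
    calc (Real.sqrt (2 * π * ↑v))⁻¹ * Real.exp C * Real.sqrt (π / A)
        = (Real.sqrt (2 * π * ↑v))⁻¹ * Real.sqrt (π / A) * Real.exp C := by ring
      _ = (Real.sqrt (1 + 2 * σ * ↑v))⁻¹ * Real.exp C := by rw [hconst]

lemma gauss_double (σ : ℝ) (hσ : 0 < σ) (c : ℝ) (v : ℝ≥0) :
    ∫ t, ∫ s, Real.exp (-(σ * (t - s) ^ 2)) ∂gaussianReal c v ∂gaussianReal c v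
      = (Real.sqrt (1 + 4 * σ * v))⁻¹ := by
  have h1 : (0:ℝ) < 1 + 2 * σ * v := by positivity
  set σ' : ℝ := σ / (1 + 2 * σ * v) with hσ'_def
  have hσ' : 0 < σ' := by positivity
  simp_rw [gauss_int σ hσ c _ v]
  rw [integral_const_mul]
  have : ∀ t : ℝ, Real.exp (-(σ / (1 + 2 * σ * ↑v) * (t - c) ^ 2))
      = Real.exp (-(σ' * (c - t) ^ 2)) := by
    intro t
    rw [hσ'_def]
    congr 1
    ring
  rw [integral_congr_ae (Filter.Eventually.of_forall this), gauss_int σ' hσ' c c v]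
  rw [sub_self]
  have h2 : (0:ℝ) < 1 + 2 * σ' * v := by positivity
  have hz : Real.exp (-(σ' / (1 + 2 * σ' * ↑v) * (0:ℝ) ^ 2)) = 1 := by norm_num
  rw [hz, mul_one, ← mul_inv, ← Real.sqrt_mul h1.le]
  have : (1 + 2 * σ * (v:ℝ)) * (1 + 2 * σ' * v) = 1 + 4 * σ * v := by
    rw [hσ'_def]; field_simp; ring
  rw [this]
lemma integral_prod_range {Ω : Type*} {mΩ : MeasurableSpace Ω} {μ : Measure Ω}
    [IsProbabilityMeasure μ] {f : ℕ → Ω → ℝ} (hf : ∀ i, Measurable (f i))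
    (hIndep : iIndepFun (m := fun _ => Real.measurableSpace) f μ) (n : ℕ) :
    ∫ x, ∏ i ∈ Finset.range n, f i x ∂μ = ∏ i ∈ Finset.range n, ∫ x, f i x ∂μ := by
  induction n with
  | zero => simp
  | succ n ih =>
    have hind := hIndep.indepFun_prod_range_succ hf n
    have hm : AEStronglyMeasurable (∏ j ∈ Finset.range n, f j) μ := by
      have : Measurable (∏ j ∈ Finset.range n, f j) := by
        have := Finset.measurable_prod (Finset.range n) (fun i (_ : i ∈ Finset.range n) => hf i)
        convert this using 1
        ext x; simp [Finset.prod_apply]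
      exact this.aestronglyMeasurable
    have h := IndepFun.integral_mul_eq_mul_integral hind hm (hf n).aestronglyMeasurable
    have h2 : ∫ x, (∏ i ∈ Finset.range n, f i x) * f n x ∂μ
        = (∫ x, ∏ i ∈ Finset.range n, f i x ∂μ) * ∫ x, f n x ∂μ := by
      have e1 : ∫ x, (∏ i ∈ Finset.range n, f i x) * f n x ∂μ
          = integral μ ((∏ j ∈ Finset.range n, f j) * f n) := by
        congr 1; ext x; simp [Finset.prod_apply]
      have e2 : ∫ x, ∏ i ∈ Finset.range n, f i x ∂μ
          = integral μ (∏ j ∈ Finset.range n, f j) := by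
        congr 1; ext x; simp [Finset.prod_apply]
      rw [e1, e2, h]
    simp only [Finset.prod_range_succ]
    rw [h2, ih]
lemma rpow_neg_half_eq (x : ℝ) (hx : 0 < x) : x ^ (-(1:ℝ)/2) = (Real.sqrt x)⁻¹ := by
  rw [Real.sqrt_eq_rpow, show (-(1:ℝ)/2) = -(1/2 : ℝ) by norm_num, Real.rpow_neg hx.le]

lemma tendsto_prod_inv_sqrt (c : ℕ → ℝ) (hc : ∀ i, 0 ≤ c i) (hsum : Summable c) :
    Tendsto (fun N => ∏ i ∈ Finset.range N, (Real.sqrt (1 + c i))⁻¹) atTop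
      (𝓝 (∏' i, (1 + c i) ^ (-(1:ℝ)/2))) := by
  have hpos : ∀ i, (0:ℝ) < 1 + c i := fun i => by have := hc i; linarith
  set L : ℕ → ℝ := fun i => Real.log (1 + c i) * (-(1:ℝ)/2) with hL_def
  have hLsum : Summable L := by
    apply Summable.of_norm_bounded (g := fun i => c i * (1/2)) (hsum.mul_right _)
    intro i
    rw [hL_def]
    simp only [norm_mul, Real.norm_eq_abs]
    have hlog0 : 0 ≤ Real.log (1 + c i) := Real.log_nonneg (by linarith [hc i])
    have hlogle : Real.log (1 + c i) ≤ c i := by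
      have := Real.log_le_sub_one_of_pos (hpos i)
      linarith
    rw [abs_of_nonneg hlog0]
    have : |(-(1:ℝ)/2)| = 1/2 := by norm_num
    rw [this]
    nlinarith [hc i]
  have hS := hLsum.hasSum
  have key : ∀ i, (1 + c i) ^ (-(1:ℝ)/2) = Real.exp (L i) := by
    intro i
    rw [Real.rpow_def_of_pos (hpos i), hL_def]
  have hProd : HasProd (fun i => (1 + c i) ^ (-(1:ℝ)/2)) (Real.exp (∑' i, L i)) := by
    have h1 : Tendsto (fun F : Finset ℕ => Real.exp (∑ i ∈ F, L i)) atTop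
        (𝓝 (Real.exp (∑' i, L i))) := (Real.continuous_exp.continuousAt.tendsto).comp hS
    have h2 : (fun F : Finset ℕ => Real.exp (∑ i ∈ F, L i))
        = fun F : Finset ℕ => ∏ i ∈ F, (1 + c i) ^ (-(1:ℝ)/2) := by
      funext F
      rw [Real.exp_sum]
      exact Finset.prod_congr rfl fun i _ => (key i).symm
    rw [HasProd]
    rw [← h2]
    exact h1
  have ht := hProd.tendsto_prod_nat
  rw [hProd.tprod_eq]
  have : (fun N => ∏ i ∈ Finset.range N, (Real.sqrt (1 + c i))⁻¹)
      = fun N => ∏ i ∈ Finset.range N, (1 + c i) ^ (-(1:ℝ)/2) := by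
    funext N
    exact Finset.prod_congr rfl fun i _ => by rw [rpow_neg_half_eq _ (hpos i)]
  rw [this]
  exact ht

/-- Squared RKHS norm of the Gaussian-kernel mean embedding of `N(m, Σ)`:
if `Y, Y'` are i.i.d. Gaussian in `H` with mean `m` and covariance diagonalized
in the basis `b` with eigenvalues `ev`, then
`E exp(−σ‖Y − Y'‖²) = ∏ᵢ (1 + 4σλᵢ)^{−1/2}`. -/
theorem gaussian_kernel_embedding_norm_sq
    {H : Type*} [NormedAddCommGroup H] [InnerProductSpace ℝ H] [CompleteSpace H]
    [MeasurableSpace H] [BorelSpace H]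
    (b : HilbertBasis ℕ ℝ H) (m : H) (ev : ℕ → ℝ≥0)
    (hev : Summable fun i => (ev i : ℝ))
    (μ : Measure H) [IsProbabilityMeasure μ]
    (hGauss : ∀ i, Measure.map (fun x => (inner ℝ x (b i) : ℝ)) μ
        = gaussianReal (inner ℝ m (b i)) (ev i))
    (hIndep : iIndepFun (m := fun _ => Real.measurableSpace)
        (fun i => fun x : H => (inner ℝ x (b i) : ℝ)) μ)
    (σ : ℝ) (hσ : 0 < σ) :
    ∫ x, ∫ x', Real.exp (-σ * ‖x - x'‖ ^ 2) ∂μ ∂μ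
      = ∏' i, ((1 : ℝ) + 4 * σ * (ev i : ℝ)) ^ (-(1 : ℝ) / 2) := by
  set X : ℕ → H → ℝ := fun i x => (inner ℝ x (b i) : ℝ) with hX_def
  have hXcont : ∀ i, Continuous (X i) := fun i => continuous_id.inner continuous_const
  have hXmeas : ∀ i, Measurable (X i) := fun i => (hXcont i).measurable
  set mi : ℕ → ℝ := fun i => (inner ℝ m (b i) : ℝ) with hmi_def
  set g : ℕ → ℝ → ℝ :=
    fun i t => ∫ s, Real.exp (-(σ * (t - s) ^ 2)) ∂gaussianReal (mi i) (ev i) with hg_def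
  have hg_eq : ∀ i t, g i t = (Real.sqrt (1 + 2 * σ * ev i))⁻¹
      * Real.exp (-(σ / (1 + 2 * σ * ev i) * (t - mi i) ^ 2)) :=
    fun i t => gauss_int σ hσ (mi i) t (ev i)
  have h2pos : ∀ i : ℕ, (0:ℝ) < 1 + 2 * σ * ev i := fun i => by positivity
  have hcH : ∀ (i : ℕ) (t : ℝ), Continuous fun x' : H => Real.exp (-(σ * (t - X i x') ^ 2)) :=
    fun i t => Real.continuous_exp.comp
      (continuous_const.mul ((continuous_const.sub (hXcont i)).pow 2)).neg
  have hcR : ∀ t : ℝ, Continuous fun s : ℝ => Real.exp (-(σ * (t - s) ^ 2)) :=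
    fun t => Real.continuous_exp.comp
      (continuous_const.mul ((continuous_const.sub continuous_id).pow 2)).neg
  have hg_cont : ∀ i, Continuous (g i) := by
    intro i
    have : g i = fun t => (Real.sqrt (1 + 2 * σ * ev i))⁻¹
        * Real.exp (-(σ / (1 + 2 * σ * ev i) * (t - mi i) ^ 2)) := funext (hg_eq i)
    rw [this]
    exact continuous_const.mul (Real.continuous_exp.comp
      (continuous_const.mul ((continuous_id.sub continuous_const).pow 2)).neg)
  have hg_meas : ∀ i, Measurable (g i) := fun i => (hg_cont i).measurable
  have hg_nonneg : ∀ i t, 0 ≤ g i t := by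
    intro i t; rw [hg_eq]; positivity
  have hg_le_one : ∀ i t, g i t ≤ 1 := by
    intro i t
    rw [hg_eq]
    have h1 : (Real.sqrt (1 + 2 * σ * ev i))⁻¹ ≤ 1 := by
      rw [inv_le_one_iff₀]
      right
      have h0 : (0:ℝ) ≤ 2 * σ * ev i := by positivity
      nlinarith [Real.sq_sqrt (by linarith : (0:ℝ) ≤ 1 + 2 * σ * ev i),
        Real.sqrt_nonneg (1 + 2 * σ * ev i)]
    have h2 : Real.exp (-(σ / (1 + 2 * σ * ev i) * (t - mi i) ^ 2)) ≤ 1 := by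
      rw [Real.exp_le_one_iff]
      have : 0 ≤ σ / (1 + 2 * σ * ev i) * (t - mi i) ^ 2 := by positivity
      linarith
    calc (Real.sqrt (1 + 2 * σ * ev i))⁻¹ * Real.exp (-(σ / (1 + 2 * σ * ev i) * (t - mi i) ^ 2))
        ≤ 1 * 1 := mul_le_mul h1 h2 (Real.exp_nonneg _) zero_le_one
      _ = 1 := mul_one 1
  have hinner : ∀ x : H, Tendsto (fun N => ∏ i ∈ Finset.range N, g i (X i x)) atTop
      (𝓝 (∫ x', Real.exp (-σ * ‖x - x'‖ ^ 2) ∂μ)) := by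
    intro x
    have hFmeas : ∀ N, AEStronglyMeasurable
        (fun x' : H => ∏ i ∈ Finset.range N,
          Real.exp (-(σ * (X i x - X i x') ^ 2))) μ := by
      intro N
      refine Measurable.aestronglyMeasurable ?_
      refine Finset.measurable_prod _ fun i _ => ?_
      exact (hcH i (X i x)).measurable
    have hbd : ∀ N, ∀ᵐ x' ∂μ, ‖∏ i ∈ Finset.range N,
        Real.exp (-(σ * (X i x - X i x') ^ 2))‖ ≤ (1 : ℝ) := by
      intro N
      refine Filter.Eventually.of_forall fun x' => ?_
      rw [Real.norm_eq_abs, abs_of_nonneg (Finset.prod_nonneg fun i _ => (Real.exp_nonneg _))]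
      refine Finset.prod_le_one (fun i _ => Real.exp_nonneg _) fun i _ => ?_
      rw [Real.exp_le_one_iff]
      have : (0:ℝ) ≤ σ * (X i x - X i x') ^ 2 := by positivity
      linarith
    have hlim : ∀ᵐ x' ∂μ, Tendsto (fun N => ∏ i ∈ Finset.range N,
        Real.exp (-(σ * (X i x - X i x') ^ 2))) atTop
        (𝓝 (Real.exp (-σ * ‖x - x'‖ ^ 2))) := by
      refine Filter.Eventually.of_forall fun x' => ?_
      have hsum : HasSum (fun i => (X i x - X i x') ^ 2) (‖x - x'‖ ^ 2) := by
        have h := b.hasSum_inner_mul_inner (x - x') (x - x')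
        rw [real_inner_self_eq_norm_sq] at h
        convert h using 2 with i
        · rfl
        rw [hX_def]
        simp only
        rw [← inner_sub_left]
        rw [sq, real_inner_comm]
      have h1 : Tendsto (fun N => ∑ i ∈ Finset.range N, (X i x - X i x') ^ 2) atTop
          (𝓝 (‖x - x'‖ ^ 2)) := hsum.tendsto_sum_nat
      have h2 : Tendsto (fun r : ℝ => Real.exp (-σ * r)) (𝓝 (‖x - x'‖ ^ 2))
          (𝓝 (Real.exp (-σ * ‖x - x'‖ ^ 2))) :=
        (Real.continuous_exp.comp (continuous_const.mul continuous_id)).continuousAt.tendsto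
      have h3 := h2.comp h1
      have hfun : (fun N => ∏ i ∈ Finset.range N, Real.exp (-(σ * (X i x - X i x') ^ 2)))
          = (fun r : ℝ => Real.exp (-σ * r))
            ∘ (fun N => ∑ i ∈ Finset.range N, (X i x - X i x') ^ 2) := by
        funext N
        rw [Function.comp_apply, ← Real.exp_sum]
        congr 1
        rw [neg_mul, Finset.mul_sum, ← Finset.sum_neg_distrib]
      rw [hfun]
      exact h3
    have hDCT := tendsto_integral_of_dominated_convergence (μ := μ)
      (F := fun N x' => ∏ i ∈ Finset.range N, Real.exp (-(σ * (X i x - X i x') ^ 2)))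
      (f := fun x' => Real.exp (-σ * ‖x - x'‖ ^ 2)) (fun _ => (1:ℝ))
      hFmeas (integrable_const 1) hbd hlim
    have hfac : ∀ N, (∫ x', ∏ i ∈ Finset.range N,
        Real.exp (-(σ * (X i x - X i x') ^ 2)) ∂μ)
        = ∏ i ∈ Finset.range N, g i (X i x) := by
      intro N
      have hcomp : iIndepFun (m := fun _ => Real.measurableSpace)
          (fun i => (fun s : ℝ => Real.exp (-(σ * (X i x - s) ^ 2))) ∘ X i) μ :=
        hIndep.comp _ (fun i => (hcR (X i x)).measurable)
      have hm : ∀ i, Measurable (fun x' : H => Real.exp (-(σ * (X i x - X i x') ^ 2))) :=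
        fun i => (hcH i (X i x)).measurable
      rw [integral_prod_range hm hcomp N]
      refine Finset.prod_congr rfl fun i _ => ?_
      have heq : ∫ x', Real.exp (-(σ * (X i x - X i x') ^ 2)) ∂μ
          = ∫ s, Real.exp (-(σ * (X i x - s) ^ 2)) ∂(Measure.map (X i) μ) := by
        rw [integral_map (hXmeas i).aemeasurable
          (hcR (X i x)).measurable.aestronglyMeasurable]
      rw [heq, hGauss i]
    have heqfun : (fun N => ∫ x', ∏ i ∈ Finset.range N,
        Real.exp (-(σ * (X i x - X i x') ^ 2)) ∂μ)
        = fun N => ∏ i ∈ Finset.range N, g i (X i x) := funext hfac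
    rw [heqfun] at hDCT
    exact hDCT
  have hGmeas : ∀ N, AEStronglyMeasurable
      (fun x : H => ∏ i ∈ Finset.range N, g i (X i x)) μ := by
    intro N
    refine Measurable.aestronglyMeasurable ?_
    exact Finset.measurable_prod _ fun i _ => (hg_meas i).comp (hXmeas i)
  have hGbd : ∀ N, ∀ᵐ x ∂μ, ‖∏ i ∈ Finset.range N, g i (X i x)‖ ≤ (1:ℝ) := by
    intro N
    refine Filter.Eventually.of_forall fun x => ?_
    rw [Real.norm_eq_abs, abs_of_nonneg (Finset.prod_nonneg fun i _ => hg_nonneg i _)]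
    exact Finset.prod_le_one (fun i _ => hg_nonneg i _) fun i _ => hg_le_one i _
  have houter := tendsto_integral_of_dominated_convergence (μ := μ)
    (F := fun N x => ∏ i ∈ Finset.range N, g i (X i x))
    (f := fun x => ∫ x', Real.exp (-σ * ‖x - x'‖ ^ 2) ∂μ) (fun _ => (1:ℝ))
    hGmeas (integrable_const 1) hGbd (Filter.Eventually.of_forall hinner)
  have hPN : ∀ N, (∫ x, ∏ i ∈ Finset.range N, g i (X i x) ∂μ)
      = ∏ i ∈ Finset.range N, (Real.sqrt (1 + 4 * σ * ev i))⁻¹ := by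
    intro N
    have hcomp : iIndepFun (m := fun _ => Real.measurableSpace)
        (fun i => g i ∘ X i) μ := hIndep.comp _ hg_meas
    have hm : ∀ i, Measurable (fun x : H => g i (X i x)) :=
      fun i => (hg_meas i).comp (hXmeas i)
    rw [integral_prod_range hm hcomp N]
    refine Finset.prod_congr rfl fun i _ => ?_
    have heq : ∫ x, g i (X i x) ∂μ = ∫ t, g i t ∂(Measure.map (X i) μ) := by
      rw [integral_map (hXmeas i).aemeasurable (hg_meas i).aestronglyMeasurable]
    rw [heq, hGauss i]
    exact gauss_double σ hσ (mi i) (ev i)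
  have hT := tendsto_prod_inv_sqrt (fun i => 4 * σ * (ev i : ℝ))
    (fun i => by positivity) (hev.mul_left (4 * σ))
  have h1 : Tendsto (fun N => ∏ i ∈ Finset.range N, (Real.sqrt (1 + 4 * σ * ev i))⁻¹)
      atTop (𝓝 (∫ x, ∫ x', Real.exp (-σ * ‖x - x'‖ ^ 2) ∂μ ∂μ)) := by
    have heqfun : (fun N => ∫ x, ∏ i ∈ Finset.range N, g i (X i x) ∂μ)
        = fun N => ∏ i ∈ Finset.range N, (Real.sqrt (1 + 4 * σ * ev i))⁻¹ := funext hPN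
    rw [heqfun] at houter
    exact houter
  exact tendsto_nhds_unique h1 hT
end

section
/- Let Y, Y' be i.i.d. Gaussian random variables in a separable Hilbert space H with mean m = 0 and trace-class covariance Σ whose largest eigenvalue λ_1 satisfies λ_1 < 1. Then E exp(⟨Y, Y'⟩) = Π_{i≥1}(1 − λ_i²)^{−1/2} = |I − Σ²|^{−1/2}, and this quantity is finite and positive. -/
open MeasureTheory ProbabilityTheory Real Filter
open scoped ENNReal NNReal


lemma aux_gauss_exp (v : ℝ≥0) (a c : ℝ) (h : 2 * c * v < 1) :
    Integrable (fun t => Real.exp (a * t + c * t ^ 2)) (gaussianReal 0 v) ∧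
    ∫ t, Real.exp (a * t + c * t ^ 2) ∂(gaussianReal 0 v)
      = (1 - 2 * c * v) ^ (-(1:ℝ) / 2) * Real.exp (v * a ^ 2 / (2 * (1 - 2 * c * v))) := by
  by_cases hv : v = 0
  · subst hv
    rw [gaussianReal_zero_var]
    constructor
    · constructor
      · exact (((measurable_const.mul measurable_id').add
          ((measurable_const.mul (measurable_id'.pow_const 2)))).exp).aestronglyMeasurable
      · rw [HasFiniteIntegral, lintegral_dirac]
        exact enorm_lt_top
    · rw [integral_dirac]
      simp
  · have hV : (0:ℝ) < v := lt_of_le_of_ne v.coe_nonneg (by exact_mod_cast (Ne.symm hv))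
    set V : ℝ := (v : ℝ) with hVdef
    set β : ℝ := (2 * V)⁻¹ - c with hβdef
    have hβ : 0 < β := by
      have h1 : (2 * V)⁻¹ * (2 * V) = 1 := inv_mul_cancel₀ (by positivity)
      rw [hβdef, sub_pos]
      nlinarith [inv_pos.mpr (show (0:ℝ) < 2 * V by positivity)]
    have h2vβ : 1 - 2 * c * V = 2 * V * β := by
      rw [hβdef]; field_simp
    have hβne : β ≠ 0 := ne_of_gt hβ
    have hVne : V ≠ 0 := ne_of_gt hV
    set d : ℝ := a / (2 * β) with hd
    set K : ℝ := (Real.sqrt (2 * π * V))⁻¹ * Real.exp (a ^ 2 / (4 * β)) with hK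
    have hpdf : gaussianReal 0 v
        = volume.withDensity (fun x => ((gaussianPDFReal 0 v x).toNNReal : ℝ≥0∞)) := by
      rw [gaussianReal_of_var_ne_zero _ hv]; rfl
    have key : ∀ t : ℝ, Real.exp (a * t + c * t ^ 2) * gaussianPDFReal 0 v t
        = K * Real.exp (-β * (t - d) ^ 2) := by
      intro t
      have hmain : Real.exp (a * t + c * t ^ 2) * Real.exp (-(t - 0) ^ 2 / (2 * (v:ℝ)))
          = Real.exp (a ^ 2 / (4 * β)) * Real.exp (-β * (t - d) ^ 2) := by
        have hβeq : β = (1 - 2*c*V)/(2*V) := by rw [hβdef]; field_simp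
        have h1ne : (1 - 2*c*V) ≠ 0 := by
          have := mul_pos (mul_pos (by norm_num : (0:ℝ) < 2) hV) hβ
          rw [← h2vβ] at this; exact ne_of_gt this
        have hc : c = (2*V)⁻¹ - β := by rw [hβdef]; ring
        rw [← Real.exp_add, ← Real.exp_add, Real.exp_eq_exp, hd, ← hVdef, hc]
        field_simp
        ring
      rw [gaussianPDFReal, hK, mul_left_comm, hmain]
      exact (mul_assoc _ _ _).symm
    have hInt_vol : Integrable (fun t => K * Real.exp (-β * (t - d) ^ 2)) volume :=
      ((integrable_exp_neg_mul_sq hβ).comp_sub_right d).const_mul K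
    have hmeaspdf : Measurable fun x => ((gaussianPDFReal 0 v x).toNNReal : ℝ≥0∞) :=
      (measurable_gaussianPDFReal 0 v).real_toNNReal.coe_nnreal_ennreal
    constructor
    · rw [hpdf, integrable_withDensity_iff hmeaspdf (ae_of_all _ fun x => ENNReal.coe_lt_top)]
      refine hInt_vol.congr (ae_of_all _ fun t => ?_)
      simp only [ENNReal.coe_toReal, Real.coe_toNNReal _ (gaussianPDFReal_nonneg 0 v t), ← key t]
    · rw [hpdf, integral_withDensity_eq_integral_smul (measurable_gaussianPDFReal 0 v).real_toNNReal]
      have : ∀ t : ℝ, (Real.toNNReal (gaussianPDFReal 0 v t)) • Real.exp (a * t + c * t ^ 2)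
          = K * Real.exp (-β * (t - d) ^ 2) := by
        intro t
        rw [NNReal.smul_def, smul_eq_mul, Real.coe_toNNReal _ (gaussianPDFReal_nonneg 0 v t),
          mul_comm, key t]
      rw [integral_congr_ae (ae_of_all _ this), integral_const_mul,
        integral_sub_right_eq_self (fun t => Real.exp (-β * t ^ 2)) d, integral_gaussian]
      -- now arithmetic
      have hsq : Real.sqrt (π / β) * Real.sqrt (2 * π * V) ≠ 0 := by positivity
      have h1 : ((1 : ℝ) - 2 * c * V) ^ (-(1:ℝ) / 2) = (Real.sqrt (2 * V * β))⁻¹ := by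
        rw [h2vβ, neg_div, Real.rpow_neg (by positivity), Real.rpow_def_of_pos (by positivity),
          Real.sqrt_eq_rpow, Real.rpow_def_of_pos (by positivity)]
      rw [hK, h1, h2vβ]
      have h0 : Real.sqrt (π / β) * Real.sqrt (2 * V * β) = Real.sqrt (2 * π * V) := by
        rw [← Real.sqrt_mul (by positivity)]
        congr 1
        field_simp
      have ha : (0:ℝ) < Real.sqrt (π / β) := Real.sqrt_pos.mpr (by positivity)
      have hb : (0:ℝ) < Real.sqrt (2 * V * β) := Real.sqrt_pos.mpr (by positivity)
      have h2 : (Real.sqrt (2 * π * V))⁻¹ * Real.sqrt (π / β) = (Real.sqrt (2 * V * β))⁻¹ := by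
        rw [← h0]
        field_simp
      rw [mul_right_comm, h2]
      congr 1
      field_simp
      ring

lemma aux_mgf (v : ℝ≥0) (a : ℝ) :
    Integrable (fun t => Real.exp (a * t)) (gaussianReal 0 v) ∧
    ∫ t, Real.exp (a * t) ∂(gaussianReal 0 v) = Real.exp (v * a ^ 2 / 2) := by
  have h := aux_gauss_exp v a 0 (by norm_num)
  simp only [zero_mul, add_zero, mul_zero, sub_zero, Real.one_rpow, one_mul, mul_one] at h
  exact h

lemma aux_sq (v : ℝ≥0) (c : ℝ) (h : 2 * c * v < 1) :
    Integrable (fun t => Real.exp (c * t ^ 2)) (gaussianReal 0 v) ∧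
    ∫ t, Real.exp (c * t ^ 2) ∂(gaussianReal 0 v) = (1 - 2 * c * v) ^ (-(1:ℝ) / 2) := by
  have h2 := aux_gauss_exp v 0 c h
  simp only [zero_mul, zero_add, ne_eq, OfNat.ofNat_ne_zero, not_false_eq_true, zero_pow,
    mul_zero, zero_div, Real.exp_zero, mul_one] at h2
  exact h2

lemma aux_indep_prod {Ω : Type*} [MeasurableSpace Ω] (μ : Measure Ω) [IsProbabilityMeasure μ]
    (Y : ℕ → Ω → ℝ) (hmeas : ∀ i, Measurable (Y i))
    (hind : iIndepFun Y μ)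
    (hint : ∀ i, Integrable (Y i) μ) (n : ℕ) :
    Integrable (fun ω => ∏ i ∈ Finset.range n, Y i ω) μ ∧
    ∫ ω, ∏ i ∈ Finset.range n, Y i ω ∂μ = ∏ i ∈ Finset.range n, ∫ ω, Y i ω ∂μ := by
  induction n with
  | zero => simp
  | succ n ih =>
    have hip : IndepFun (∏ j ∈ Finset.range n, Y j) (Y n) μ :=
      hind.indepFun_prod_range_succ hmeas n
    have hprod_eq : (∏ j ∈ Finset.range n, Y j) = fun ω => ∏ i ∈ Finset.range n, Y i ω := by
      ext ω; rw [Finset.prod_apply]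
    rw [hprod_eq] at hip
    have hint_n : Integrable (fun ω => (∏ i ∈ Finset.range n, Y i ω) * Y n ω) μ := by
      exact hip.integrable_mul ih.1 (hint n)
    constructor
    · refine hint_n.congr (ae_of_all _ fun ω => ?_)
      exact (Finset.prod_range_succ _ _).symm
    · calc ∫ ω, ∏ i ∈ Finset.range (n+1), Y i ω ∂μ
          = ∫ ω, (∏ i ∈ Finset.range n, Y i ω) * Y n ω ∂μ := by
            congr 1; funext ω; rw [Finset.prod_range_succ]
      _ = (∫ ω, ∏ i ∈ Finset.range n, Y i ω ∂μ) * ∫ ω, Y n ω ∂μ :=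
            hip.integral_mul_eq_mul_integral ih.1.aestronglyMeasurable (hint n).aestronglyMeasurable
      _ = ∏ i ∈ Finset.range (n+1), ∫ ω, Y i ω ∂μ := by
            rw [Finset.prod_range_succ, ih.2]

lemma aux_log (L L0 : ℝ) (h0 : 0 ≤ L) (h1 : L ≤ L0) (h2 : L0 < 1) :
    -Real.log (1 - L) ≤ L / (1 - L0) := by
  have hL1 : 0 < 1 - L := by linarith
  have hL0 : 0 < 1 - L0 := by linarith
  have hinv : 0 < (1 - L)⁻¹ := inv_pos.mpr hL1
  have hlog : Real.log ((1 - L)⁻¹) ≤ (1 - L)⁻¹ - 1 := Real.log_le_sub_one_of_pos hinv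
  rw [Real.log_inv] at hlog
  have heq : (1 - L)⁻¹ - 1 = L / (1 - L) := by field_simp; ring
  have hle2 : L / (1 - L) ≤ L / (1 - L0) :=
    div_le_div_of_nonneg_left h0 hL0 (by linarith)
  linarith

lemma aux_term (L L0 : ℝ) (h0 : 0 ≤ L) (h1 : L ≤ L0) (h2 : L0 < 1) :
    (1 - L) ^ (-(1:ℝ)/2) ≤ Real.exp (L / (2 * (1 - L0))) := by
  have hL1 : 0 < 1 - L := by linarith
  have hL0 : 0 < 1 - L0 := by linarith
  rw [Real.rpow_def_of_pos hL1, Real.exp_le_exp]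
  have h3 := aux_log L L0 h0 h1 h2
  have h6 : L / (1 - L0) / 2 = L / (2 * (1 - L0)) := by
    rw [div_div]; congr 1; ring
  linarith

/-- Exponential-kernel norm of the embedding of `N(0, Σ)`: if `Y, Y'` are i.i.d.
centered Gaussian in `H`, with covariance diagonalized in the basis `b` with
summable eigenvalues `ev` satisfying `ev i ≤ ev 0 < 1`, then
`E exp(⟨Y, Y'⟩) = ∏ᵢ (1 − λᵢ²)^{−1/2}`, a finite and positive quantity. -/
theorem gaussian_exponential_kernel_embedding_norm_sq
    {H : Type*} [NormedAddCommGroup H] [InnerProductSpace ℝ H] [CompleteSpace H]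
    [MeasurableSpace H] [BorelSpace H]
    (b : HilbertBasis ℕ ℝ H) (ev : ℕ → ℝ≥0)
    (hev : Summable fun i => (ev i : ℝ))
    (hmono : ∀ i, ev i ≤ ev 0) (htop : (ev 0 : ℝ) < 1)
    (μ : Measure H) [IsProbabilityMeasure μ]
    (hGauss : ∀ i, Measure.map (fun x => (inner ℝ x (b i) : ℝ)) μ
        = gaussianReal 0 (ev i))
    (hIndep : iIndepFun
        (fun i => fun x : H => (inner ℝ x (b i) : ℝ)) μ) :
    (∫ x, ∫ x', Real.exp (inner ℝ x x' : ℝ) ∂μ ∂μ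
        = ∏' i, ((1 : ℝ) - (ev i : ℝ) ^ 2) ^ (-(1 : ℝ) / 2))
      ∧ Multipliable (fun i => ((1 : ℝ) - (ev i : ℝ) ^ 2) ^ (-(1 : ℝ) / 2))
      ∧ 0 < ∏' i, ((1 : ℝ) - (ev i : ℝ) ^ 2) ^ (-(1 : ℝ) / 2) := by
  -- separability of H
  haveI : TopologicalSpace.SeparableSpace H := by
    rw [← TopologicalSpace.isSeparable_univ_iff]
    have h2 : TopologicalSpace.IsSeparable (Set.range (⇑b)) :=
      (Set.countable_range _).isSeparable
    have h3 := h2.span (R := ℝ)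
    have h4 := b.dense_span
    have h5 : (Set.univ : Set H) = closure (Submodule.span ℝ (Set.range ⇑b) : Set H) := by
      rw [← Submodule.topologicalClosure_coe, h4, Submodule.top_coe]
    rw [h5]
    exact h3.closure
  haveI : SecondCountableTopology H := UniformSpace.secondCountable_of_separable H
  -- basic facts about eigenvalues
  have hnneg : ∀ i, (0:ℝ) ≤ (ev i : ℝ) := fun i => (ev i).coe_nonneg
  have hle : ∀ i, (ev i : ℝ) ≤ (ev 0 : ℝ) := fun i => by exact_mod_cast hmono i
  have hlt1 : ∀ i, (ev i : ℝ) < 1 := fun i => lt_of_le_of_lt (hle i) htop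
  -- measurability of coordinates
  have hXmeas : ∀ i, Measurable (fun x : H => (inner ℝ x (b i) : ℝ)) := fun i =>
    (continuous_id.inner continuous_const).measurable
  -- pull back integrals along coordinates
  have hpull_eq : ∀ (i : ℕ) (g : ℝ → ℝ), Measurable g →
      ∫ x, g (inner ℝ x (b i) : ℝ) ∂μ = ∫ t, g t ∂(gaussianReal 0 (ev i)) := by
    intro i g hg
    rw [← hGauss i, integral_map (hXmeas i).aemeasurable hg.aestronglyMeasurable]
  have hpull_int : ∀ (i : ℕ) (g : ℝ → ℝ), Measurable g →
      Integrable g (gaussianReal 0 (ev i)) →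
      Integrable (fun x => g (inner ℝ x (b i) : ℝ)) μ := by
    intro i g hg hgi
    rw [← hGauss i] at hgi
    exact (integrable_map_measure hg.aestronglyMeasurable (hXmeas i).aemeasurable).mp hgi
  -- Claim A : inner ℝ integral (MGF step)
  have claimA : ∀ (a : ℕ → ℝ) (n : ℕ),
      ∫ x, Real.exp (∑ i ∈ Finset.range n, a i * (inner ℝ x (b i) : ℝ)) ∂μ
        = Real.exp (∑ i ∈ Finset.range n, ((ev i : ℝ)/2) * (a i) ^ 2) := by
    intro a n
    have hg : ∀ i, Measurable (fun t : ℝ => Real.exp (a i * t)) := fun i =>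
      (measurable_id.const_mul (a i)).exp
    have hint : ∀ i, Integrable (fun x : H => Real.exp (a i * (inner ℝ x (b i) : ℝ))) μ :=
      fun i => hpull_int i _ (hg i) (aux_mgf (ev i) (a i)).1
    have hind2 := hIndep.comp (fun i t => Real.exp (a i * t)) hg
    have hprod := aux_indep_prod μ
      (fun i => (fun t => Real.exp (a i * t)) ∘ (fun x : H => (inner ℝ x (b i) : ℝ)))
      (fun i => (hg i).comp (hXmeas i)) hind2 hint n
    calc ∫ x, Real.exp (∑ i ∈ Finset.range n, a i * (inner ℝ x (b i) : ℝ)) ∂μ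
        = ∫ x, ∏ i ∈ Finset.range n, Real.exp (a i * (inner ℝ x (b i) : ℝ)) ∂μ := by
          simp_rw [Real.exp_sum]
      _ = ∏ i ∈ Finset.range n, ∫ x, Real.exp (a i * (inner ℝ x (b i) : ℝ)) ∂μ := hprod.2
      _ = ∏ i ∈ Finset.range n, Real.exp (((ev i : ℝ)/2) * (a i) ^ 2) := by
          refine Finset.prod_congr rfl fun i _ => ?_
          rw [hpull_eq i _ (hg i), (aux_mgf (ev i) (a i)).2]
          congr 1; ring
      _ = Real.exp (∑ i ∈ Finset.range n, ((ev i : ℝ)/2) * (a i) ^ 2) :=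
          (Real.exp_sum _ _).symm
  -- Claim B : outer integral (squares step)
  have claimB : ∀ (q : ℕ → ℝ), (∀ i, 2 * q i * (ev i : ℝ) < 1) → ∀ n,
      Integrable (fun x => Real.exp (∑ i ∈ Finset.range n, q i * (inner ℝ x (b i) : ℝ)^2)) μ ∧
      ∫ x, Real.exp (∑ i ∈ Finset.range n, q i * (inner ℝ x (b i) : ℝ)^2) ∂μ
        = ∏ i ∈ Finset.range n, ((1:ℝ) - 2 * q i * (ev i : ℝ)) ^ (-(1:ℝ)/2) := by
    intro q hq n
    have hg : ∀ i, Measurable (fun t : ℝ => Real.exp (q i * t ^ 2)) := fun i =>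
      ((measurable_id.pow_const 2).const_mul (q i)).exp
    have hint : ∀ i, Integrable (fun x : H => Real.exp (q i * (inner ℝ x (b i) : ℝ) ^ 2)) μ :=
      fun i => hpull_int i _ (hg i) (aux_sq (ev i) (q i) (hq i)).1
    have hind2 := hIndep.comp (fun i t => Real.exp (q i * t ^ 2)) hg
    have hprod := aux_indep_prod μ
      (fun i => (fun t => Real.exp (q i * t ^ 2)) ∘ (fun x : H => (inner ℝ x (b i) : ℝ)))
      (fun i => (hg i).comp (hXmeas i)) hind2 hint n
    constructor
    · refine hprod.1.congr (ae_of_all _ fun x => ?_)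
      simp_rw [Real.exp_sum]
      rfl
    · calc ∫ x, Real.exp (∑ i ∈ Finset.range n, q i * (inner ℝ x (b i) : ℝ) ^ 2) ∂μ
          = ∫ x, ∏ i ∈ Finset.range n, Real.exp (q i * (inner ℝ x (b i) : ℝ) ^ 2) ∂μ := by
            simp_rw [Real.exp_sum]
        _ = ∏ i ∈ Finset.range n, ∫ x, Real.exp (q i * (inner ℝ x (b i) : ℝ) ^ 2) ∂μ := hprod.2
        _ = ∏ i ∈ Finset.range n, ((1:ℝ) - 2 * q i * (ev i : ℝ)) ^ (-(1:ℝ)/2) := by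
            refine Finset.prod_congr rfl fun i _ => ?_
            rw [hpull_eq i _ (hg i), (aux_sq (ev i) (q i) (hq i)).2]
  -- HasSum facts
  have hHS : ∀ x y : H, HasSum (fun i => (inner ℝ x (b i):ℝ) * (inner ℝ y (b i):ℝ))
      (inner ℝ x y : ℝ) := by
    intro x y
    have h := b.hasSum_inner_mul_inner x y
    have h2 : (fun i => (inner ℝ x (b i):ℝ) * (inner ℝ (b i) y :ℝ))
        = fun i => (inner ℝ x (b i):ℝ) * (inner ℝ y (b i):ℝ) := by
      funext i; rw [real_inner_comm y (b i)]
    rwa [h2] at h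
  have hHSsq : ∀ x : H, HasSum (fun i => (1/2:ℝ) * (inner ℝ x (b i):ℝ)^2) (‖x‖^2/2) := by
    intro x
    have h := (hHS x x).mul_left (1/2:ℝ)
    have h2 : (fun i => (1/2:ℝ) * ((inner ℝ x (b i):ℝ) * (inner ℝ x (b i):ℝ)))
        = fun i => (1/2:ℝ) * (inner ℝ x (b i):ℝ)^2 := by
      funext i; ring
    rw [h2] at h
    have h3 : (1/2:ℝ) * (inner ℝ x x : ℝ) = ‖x‖^2/2 := by
      rw [real_inner_self_eq_norm_sq]; ring
    rwa [h3] at h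
  -- partial sums bounded by norms
  have hsum_sq_le : ∀ (x : H) (n : ℕ),
      ∑ i ∈ Finset.range n, (inner ℝ x (b i):ℝ)^2 ≤ ‖x‖^2 := by
    intro x n
    have h := (hHS x x)
    have h2 : HasSum (fun i => (inner ℝ x (b i):ℝ)^2) (‖x‖^2) := by
      have heq : (fun i => (inner ℝ x (b i):ℝ) * (inner ℝ x (b i):ℝ))
          = fun i => (inner ℝ x (b i):ℝ)^2 := by funext i; ring
      rw [heq, real_inner_self_eq_norm_sq] at h
      exact h
    exact sum_le_hasSum _ (fun i _ => sq_nonneg _) h2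
  have habs : ∀ (x y : H) (n : ℕ),
      |∑ i ∈ Finset.range n, (inner ℝ x (b i):ℝ) * (inner ℝ y (b i):ℝ)| ≤ ‖x‖ * ‖y‖ := by
    intro x y n
    have hCS := Finset.sum_mul_sq_le_sq_mul_sq (Finset.range n)
      (fun i => (inner ℝ x (b i):ℝ)) (fun i => (inner ℝ y (b i):ℝ))
    have h1 : (∑ i ∈ Finset.range n, (inner ℝ x (b i):ℝ) * (inner ℝ y (b i):ℝ))^2
        ≤ ‖x‖^2 * ‖y‖^2 := by
      refine le_trans hCS ?_
      have hx := hsum_sq_le x n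
      have hy := hsum_sq_le y n
      have hxnn : (0:ℝ) ≤ ∑ i ∈ Finset.range n, (inner ℝ x (b i):ℝ)^2 :=
        Finset.sum_nonneg fun i _ => sq_nonneg _
      have hynn : (0:ℝ) ≤ ∑ i ∈ Finset.range n, (inner ℝ y (b i):ℝ)^2 :=
        Finset.sum_nonneg fun i _ => sq_nonneg _
      nlinarith [sq_nonneg (‖x‖ : ℝ), sq_nonneg (‖y‖:ℝ)]
    have := Real.sqrt_le_sqrt h1
    rwa [Real.sqrt_sq_eq_abs, show ‖x‖^2 * ‖y‖^2 = (‖x‖*‖y‖)^2 by ring,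
      Real.sqrt_sq (by positivity)] at this
  -- the constant C bounding partial integrals
  set L0 : ℝ := (ev 0 : ℝ) with hL0def
  have hL0nn : 0 ≤ L0 := hnneg 0
  have hCsum : Summable (fun i => (ev i:ℝ) / (2*(1 - L0))) := hev.div_const _
  set C : ℝ := Real.exp (∑' i, (ev i:ℝ) / (2*(1 - L0))) with hCdef
  -- instantiation 1 of claim B (for domination)
  have hB1 := claimB (fun _ => (1/2:ℝ)) (fun i => by
    have h := hlt1 i; nlinarith)
  have hB1int : ∀ n, Integrable
      (fun x => Real.exp (∑ i ∈ Finset.range n, (1/2:ℝ) * (inner ℝ x (b i) : ℝ)^2)) μ :=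
    fun n => (hB1 n).1
  have hB1bd : ∀ n,
      ∫ x, Real.exp (∑ i ∈ Finset.range n, (1/2:ℝ) * (inner ℝ x (b i) : ℝ)^2) ∂μ ≤ C := by
    intro n
    rw [(hB1 n).2]
    calc ∏ i ∈ Finset.range n, ((1:ℝ) - 2 * (1/2:ℝ) * (ev i : ℝ)) ^ (-(1:ℝ)/2)
        ≤ ∏ i ∈ Finset.range n, Real.exp ((ev i:ℝ) / (2*(1 - L0))) := by
          refine Finset.prod_le_prod (fun i _ => Real.rpow_nonneg (by nlinarith [hlt1 i]) _)
            (fun i _ => ?_)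
          have h := aux_term (ev i : ℝ) L0 (hnneg i) (hle i) htop
          have heq : (1:ℝ) - 2 * (1/2:ℝ) * (ev i : ℝ) = 1 - (ev i : ℝ) := by ring
          rw [heq]
          exact h
      _ = Real.exp (∑ i ∈ Finset.range n, (ev i:ℝ) / (2*(1 - L0))) := (Real.exp_sum _ _).symm
      _ ≤ C := by
          rw [hCdef, Real.exp_le_exp]
          exact Summable.sum_le_tsum _ (fun i _ => div_nonneg (hnneg i) (by nlinarith [htop])) hCsum
  -- the dominating function is integrable
  have hcontDom : Continuous (fun x : H => Real.exp (‖x‖^2/2)) :=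
    ((continuous_norm.pow 2).div_const 2).rexp
  have hDom : Integrable (fun x : H => Real.exp (‖x‖^2/2)) μ := by
    refine ⟨hcontDom.aestronglyMeasurable, ?_⟩
    rw [hasFiniteIntegral_iff_ofReal (ae_of_all _ fun x => (Real.exp_pos _).le)]
    have hmono2 : ∀ x : H, Monotone (fun n =>
        ENNReal.ofReal (Real.exp (∑ i ∈ Finset.range n, (1/2:ℝ) * (inner ℝ x (b i) : ℝ)^2))) := by
      intro x m n hmn
      refine ENNReal.ofReal_le_ofReal (Real.exp_le_exp.mpr ?_)
      exact Finset.sum_le_sum_of_subset_of_nonneg (Finset.range_subset_range.mpr hmn)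
        (fun i _ _ => by positivity)
    have htd : ∀ x : H, Tendsto (fun n =>
        ENNReal.ofReal (Real.exp (∑ i ∈ Finset.range n, (1/2:ℝ) * (inner ℝ x (b i) : ℝ)^2)))
        atTop (nhds (ENNReal.ofReal (Real.exp (‖x‖^2/2)))) := by
      intro x
      exact (ENNReal.continuous_ofReal.tendsto _).comp ((hHSsq x).tendsto_sum_nat.rexp)
    have hlim := lintegral_tendsto_of_tendsto_of_monotone
      (f := fun n x => ENNReal.ofReal
        (Real.exp (∑ i ∈ Finset.range n, (1/2:ℝ) * (inner ℝ x (b i) : ℝ)^2)))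
      (F := fun x => ENNReal.ofReal (Real.exp (‖x‖^2/2)))
      (fun n => ((hB1int n).1.aemeasurable.ennreal_ofReal))
      (ae_of_all _ hmono2) (ae_of_all _ htd)
    have hbd : ∀ n, (∫⁻ x, ENNReal.ofReal
        (Real.exp (∑ i ∈ Finset.range n, (1/2:ℝ) * (inner ℝ x (b i) : ℝ)^2)) ∂μ)
        ≤ ENNReal.ofReal C := by
      intro n
      rw [← ofReal_integral_eq_lintegral_ofReal (hB1int n)
        (ae_of_all _ fun x => (Real.exp_pos _).le)]
      exact ENNReal.ofReal_le_ofReal (hB1bd n)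
    have hfin : (∫⁻ x, ENNReal.ofReal (Real.exp (‖x‖^2/2)) ∂μ) ≤ ENNReal.ofReal C :=
      le_of_tendsto' hlim hbd |>.trans_eq rfl
    exact lt_of_le_of_lt hfin ENNReal.ofReal_lt_top
  -- the dominating function on the product space
  have hG : Integrable (fun p : H × H => Real.exp (‖p.1‖^2/2) * Real.exp (‖p.2‖^2/2))
      (μ.prod μ) := hDom.mul_prod hDom
  -- bound for exp of inner ℝ products
  have hkey_bd : ∀ (x y : H) (S : ℝ), S ≤ ‖x‖ * ‖y‖ →
      Real.exp S ≤ Real.exp (‖x‖^2/2) * Real.exp (‖y‖^2/2) := by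
    intro x y S hS
    rw [← Real.exp_add, Real.exp_le_exp]
    nlinarith [sq_nonneg (‖x‖ - ‖y‖)]
  -- the sequence of finite-dimensional approximations
  set F : ℕ → H × H → ℝ := fun n p =>
    Real.exp (∑ i ∈ Finset.range n, (inner ℝ p.1 (b i):ℝ) * (inner ℝ p.2 (b i):ℝ)) with hFdef
  have hFcont : ∀ n, Continuous (F n) := by
    intro n
    apply Continuous.rexp
    exact continuous_finset_sum _ fun i _ =>
      (continuous_fst.inner continuous_const).mul (continuous_snd.inner continuous_const)
  have hFbd : ∀ n p, ‖F n p‖ ≤ Real.exp (‖p.1‖^2/2) * Real.exp (‖p.2‖^2/2) := by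
    intro n p
    rw [hFdef, Real.norm_eq_abs, Real.abs_exp]
    exact hkey_bd p.1 p.2 _ (le_trans (le_abs_self _) (habs p.1 p.2 n))
  have hFint : ∀ n, Integrable (F n) (μ.prod μ) := fun n =>
    hG.mono' (hFcont n).aestronglyMeasurable (ae_of_all _ (hFbd n))
  -- integrability of the limit
  have hLcont : Continuous (fun p : H × H => Real.exp (inner ℝ p.1 p.2 : ℝ)) :=
    (continuous_fst.inner continuous_snd).rexp
  have hLint : Integrable (fun p : H × H => Real.exp (inner ℝ p.1 p.2 : ℝ)) (μ.prod μ) := by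
    refine hG.mono' hLcont.aestronglyMeasurable (ae_of_all _ fun p => ?_)
    rw [Real.norm_eq_abs, Real.abs_exp]
    exact hkey_bd p.1 p.2 _ (real_inner_le_norm p.1 p.2)
  -- dominated convergence
  have hDCT : Tendsto (fun n => ∫ p, F n p ∂(μ.prod μ)) atTop
      (nhds (∫ p, Real.exp (inner ℝ p.1 p.2 : ℝ) ∂(μ.prod μ))) := by
    refine tendsto_integral_of_dominated_convergence _ (fun n => (hFcont n).aestronglyMeasurable)
      hG (fun n => ae_of_all _ (hFbd n)) (ae_of_all _ fun p => ?_)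
    exact (hHS p.1 p.2).tendsto_sum_nat.rexp
  -- value of the finite-dimensional integrals
  have hFval : ∀ n, ∫ p, F n p ∂(μ.prod μ)
      = ∏ i ∈ Finset.range n, ((1:ℝ) - (ev i : ℝ)^2) ^ (-(1:ℝ)/2) := by
    intro n
    rw [integral_prod _ (hFint n)]
    have hinner : ∀ x : H, ∫ y, F n (x, y) ∂μ
        = Real.exp (∑ i ∈ Finset.range n, ((ev i : ℝ)/2) * (inner ℝ x (b i):ℝ)^2) :=
      fun x => claimA (fun i => (inner ℝ x (b i):ℝ)) n
    rw [integral_congr_ae (ae_of_all _ hinner)]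
    have hq : ∀ i, 2 * ((ev i : ℝ)/2) * (ev i : ℝ) < 1 := by
      intro i
      have h1 := hlt1 i; have h2 := hnneg i
      nlinarith
    have hcb := (claimB (fun i => (ev i : ℝ)/2) hq n).2
    have hshape : (fun x : H => Real.exp (∑ i ∈ Finset.range n,
        ((ev i : ℝ)/2) * (inner ℝ x (b i):ℝ)^2)) = fun x : H => Real.exp (∑ i ∈ Finset.range n,
        (fun j => ((ev j : ℝ)/2)) i * (inner ℝ x (b i):ℝ)^2) := rfl
    rw [hcb]
    refine Finset.prod_congr rfl fun i _ => ?_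
    congr 1
    ring
  -- convergence of the partial products
  set u : ℕ → ℝ := fun i => Real.log (1 - (ev i:ℝ)^2) * (-(1:ℝ)/2) with hudef
  have hpos2 : ∀ i, (0:ℝ) < 1 - (ev i:ℝ)^2 := by
    intro i
    have h1 := hlt1 i; have h2 := hnneg i
    nlinarith
  have hunn : ∀ i, 0 ≤ u i := by
    intro i
    have hlog : Real.log (1 - (ev i:ℝ)^2) ≤ 0 :=
      Real.log_nonpos (hpos2 i).le (by nlinarith [hnneg i])
    rw [hudef]
    nlinarith
  have hL0sq : L0^2 < 1 := by nlinarith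
  have hubd : ∀ i, u i ≤ (ev i:ℝ) * (L0 / (2 * (1 - L0^2))) := by
    intro i
    have h := aux_log ((ev i:ℝ)^2) (L0^2) (sq_nonneg _)
      (by nlinarith [hnneg i, hle i]) hL0sq
    have h2 : u i = (-Real.log (1 - (ev i:ℝ)^2)) / 2 := by rw [hudef]; ring
    have h3 : (0:ℝ) < 1 - L0^2 := by nlinarith
    have h4 : (ev i:ℝ)^2 ≤ (ev i:ℝ) * L0 := by nlinarith [hnneg i, hle i]
    have h5' : (ev i:ℝ)^2 / (1 - L0^2) ≤ (ev i:ℝ) * L0 / (1 - L0^2) := by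
      rw [div_le_div_iff₀ h3 h3]; nlinarith
    have e : (ev i:ℝ) * L0 / (1 - L0^2) / 2 = (ev i:ℝ) * (L0 / (2 * (1 - L0^2))) := by
      field_simp
    rw [h2]
    linarith
  have husum : Summable u := Summable.of_nonneg_of_le hunn hubd (hev.mul_right _)
  have hprodExp : HasProd (fun i => ((1:ℝ) - (ev i:ℝ)^2) ^ (-(1:ℝ)/2))
      (Real.exp (∑' i, u i)) := by
    have h := (husum.hasSum).rexp
    have heq : (Real.exp ∘ u) = fun i => ((1:ℝ) - (ev i:ℝ)^2) ^ (-(1:ℝ)/2) := by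
      funext i
      rw [Function.comp_apply, hudef, ← Real.rpow_def_of_pos (hpos2 i)]
    rwa [heq] at h
  have hMult : Multipliable (fun i => ((1:ℝ) - (ev i:ℝ)^2) ^ (-(1:ℝ)/2)) :=
    hprodExp.multipliable
  have htprod : (∏' i, ((1:ℝ) - (ev i:ℝ)^2) ^ (-(1:ℝ)/2)) = Real.exp (∑' i, u i) :=
    hprodExp.tprod_eq
  have hPos : 0 < ∏' i, ((1:ℝ) - (ev i:ℝ)^2) ^ (-(1:ℝ)/2) := by
    rw [htprod]; exact Real.exp_pos _
  refine ⟨?_, hMult, hPos⟩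
  have htendP : Tendsto (fun n => ∏ i ∈ Finset.range n, ((1:ℝ) - (ev i:ℝ)^2) ^ (-(1:ℝ)/2))
      atTop (nhds (∏' i, ((1:ℝ) - (ev i:ℝ)^2) ^ (-(1:ℝ)/2))) := by
    rw [htprod]; exact hprodExp.tendsto_prod_nat
  have hDCT2 : Tendsto (fun n => ∏ i ∈ Finset.range n, ((1:ℝ) - (ev i:ℝ)^2) ^ (-(1:ℝ)/2))
      atTop (nhds (∫ p, Real.exp (inner ℝ p.1 p.2 : ℝ) ∂(μ.prod μ))) := by
    refine Tendsto.congr (fun n => hFval n) hDCT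
  have hval : (∫ p, Real.exp (inner ℝ p.1 p.2 : ℝ) ∂(μ.prod μ))
      = ∏' i, ((1:ℝ) - (ev i:ℝ)^2) ^ (-(1:ℝ)/2) := tendsto_nhds_unique hDCT2 htendP
  exact (integral_integral (f := fun x x' => Real.exp (inner ℝ x x' : ℝ)) hLint).trans hval
end

section
/- Let Y₁,…,Yₙ be i.i.d. from P with E_P k̄(Y,Y) < ∞, let θ̃ₙ be estimators converging P-a.s. to θ₀, and let θ ↦ N(θ) ∈ H(k̄) be continuous at θ₀. Define Δ̂² = ‖μ̂_P − N(θ̃ₙ)‖²_{H(k̄)} and Δ² = ‖μ_P − N(θ₀)‖²_{H(k̄)}. Then Δ̂² → Δ² P-almost surely as n → ∞. -/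
open MeasureTheory ProbabilityTheory Filter
open scoped ENNReal NNReal Topology

/-- Consistency of the test statistic `Δ̂² = ‖μ̂_P − N(θ̃ₙ)‖²`: if the sample is
i.i.d. from `P` with `E k̄(Y,Y) < ∞` (kernel modeled by its feature map `φ` into
the RKHS `K`), the estimators `θ̃ₙ` converge a.s. to `θ₀`, and `θ ↦ N(θ)` is
continuous at `θ₀`, then `Δ̂² → Δ² = ‖μ_P − N(θ₀)‖²` almost surely. -/
theorem test_statistic_consistent
    {Ω : Type*} [MeasureSpace Ω] [IsProbabilityMeasure (ℙ : Measure Ω)]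
    {H K : Type*} [MeasurableSpace H]
    [NormedAddCommGroup K] [InnerProductSpace ℝ K] [CompleteSpace K]
    [MeasurableSpace K] [BorelSpace K] [SecondCountableTopology K]
    {Θ : Type*} [MetricSpace Θ]
    (φ : H → K) (hφ : Measurable φ)
    (P : Measure H) [IsProbabilityMeasure P]
    (hint : Integrable (fun y => (inner ℝ (φ y) (φ y) : ℝ)) P)
    (Y : ℕ → Ω → H) (hmeas : ∀ i, Measurable (Y i))
    (hlaw : ∀ i, Measure.map (Y i) ℙ = P)
    (hIndep : iIndepFun Y ℙ)
    (μP : K)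
    (hμP : ∀ f : K, (inner ℝ μP f : ℝ) = ∫ y, (inner ℝ f (φ y) : ℝ) ∂P)
    (θtil : ℕ → Ω → Θ) (θ₀ : Θ)
    (hθ : ∀ᵐ ω, Tendsto (fun n => θtil n ω) atTop (𝓝 θ₀))
    (N : Θ → K) (hN : ContinuousAt N θ₀) :
    ∀ᵐ ω, Tendsto
      (fun n : ℕ =>
        ‖(n : ℝ)⁻¹ • ∑ i ∈ Finset.range n, φ (Y i ω) - N (θtil n ω)‖ ^ 2)
      atTop (𝓝 (‖μP - N θ₀‖ ^ 2)) := by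
  -- integrability of φ under P
  have hφint : Integrable φ P := by
    refine Integrable.mono' (g := fun y => 1 + (inner ℝ (φ y) (φ y) : ℝ))
      ((integrable_const 1).add hint)
      (hφ.aestronglyMeasurable) ?_
    filter_upwards with y
    rw [real_inner_self_eq_norm_sq]
    nlinarith [norm_nonneg (φ y), sq_nonneg (‖φ y‖ - 1)]
  -- identify μP with the Bochner integral of φ
  have hμP' : μP = ∫ y, φ y ∂P := by
    refine ext_inner_right ℝ fun f => ?_
    rw [hμP f, integral_inner hφint]
    exact real_inner_comm _ _
  -- SLLN for X i := φ ∘ Y i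
  set X : ℕ → Ω → K := fun i ω => φ (Y i ω) with hX
  have hXmeas : ∀ i, Measurable (X i) := fun i => hφ.comp (hmeas i)
  have hXmap : ∀ i, Measure.map (X i) ℙ = Measure.map φ P := by
    intro i
    rw [← hlaw i, Measure.map_map hφ (hmeas i)]
    rfl
  have h0 : AEStronglyMeasurable φ (Measure.map (Y 0) ℙ) := by
    rw [hlaw 0]; exact hφint.aestronglyMeasurable
  have hXint : Integrable (X 0) ℙ := by
    have : Integrable (φ ∘ Y 0) ℙ := by
      rw [← integrable_map_measure h0 (hmeas 0).aemeasurable, hlaw 0]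
      exact hφint
    exact this
  have hindep : Pairwise (Function.onFun (IndepFun · · ℙ) X) := fun i j hij =>
    (hIndep.indepFun hij).comp hφ hφ
  have hident : ∀ i, IdentDistrib (X i) (X 0) ℙ ℙ := fun i =>
    ⟨(hXmeas i).aemeasurable, (hXmeas 0).aemeasurable, by rw [hXmap i, hXmap 0]⟩
  have hmean : (∫ ω, X 0 ω) = μP := by
    rw [hμP']
    calc (∫ ω, X 0 ω) = ∫ ω, φ (Y 0 ω) := rfl
      _ = ∫ y, φ y ∂P := by
          rw [← hlaw 0, integral_map (hmeas 0).aemeasurable h0]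
  have hslln := ProbabilityTheory.strong_law_ae X hXint hindep hident
  filter_upwards [hslln, hθ] with ω h1 h2
  rw [hmean] at h1
  have h3 : Tendsto (fun n => N (θtil n ω)) atTop (𝓝 (N θ₀)) := hN.tendsto.comp h2
  exact ((h1.sub h3).norm.pow 2)
end
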